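/- Let p be an odd prime, m a positive integer, and 0 ≤ d ≤ ⌊m/2⌋. For (α₀,...,α_d) ∈ F_{p^m}^{d+1} not all zero, let F(X) be the quadratic form on F_p^m given by F(X) = Tr(α₀x² + α₁x^{p+1} + ... + α_d x^{p^d+1}) under an F_p-basis identification of F_{p^m} with F_p^m. Then the rank of the symmetric matrix of F is at least m − 2d. -/

import Mathlib

attribute [local instance] ZMod.algebra

lemma trace_frob_aux18 (p : ℕ) [Fact p.Prime] (F : Type*) [Field F] [Fintype F] [CharP F p]
    (x : F) : Algebra.trace (ZMod p) F (x ^ p) = Algebra.trace (ZMod p) F x := by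
  let e : F ≃ₐ[ZMod p] F := AlgEquiv.ofRingEquiv (f := frobeniusEquiv F p)
    (fun c => by rw [coe_frobeniusEquiv, frobenius_def, ← map_pow, ZMod.pow_card])
  have := Algebra.trace_eq_of_algEquiv e x
  simpa [e, AlgEquiv.ofRingEquiv, coe_frobeniusEquiv, frobenius_def] using this

lemma trace_frob_pow_aux18 (p : ℕ) [Fact p.Prime] (F : Type*) [Field F] [Fintype F] [CharP F p]
    (e : ℕ) (x : F) : Algebra.trace (ZMod p) F (x ^ p ^ e) = Algebra.trace (ZMod p) F x := by
  induction e with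
  | zero => simp
  | succ n ih => rw [pow_succ, pow_mul, trace_frob_aux18, ih]

theorem stmt_18 (p m d : ℕ) [Fact p.Prime] (hp2 : Odd p) (hm : 0 < m)
    (hd : d ≤ m / 2)
    (F : Type*) [Field F] [Fintype F] [CharP F p]
    (b : Module.Basis (Fin m) (ZMod p) F)
    (α : Fin (d + 1) → F) (hα : α ≠ 0)
    (H : Matrix (Fin m) (Fin m) (ZMod p)) (hH : H.IsSymm)
    (hF : ∀ X : Fin m → ZMod p,
      (∑ i, ∑ j, X i * H i j * X j) =
        Algebra.trace (ZMod p) F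
          (∑ k : Fin (d + 1), α k * (∑ j, X j • b j) ^ (p ^ (k : ℕ) + 1))) :
    m - 2 * d ≤ H.rank := by
  classical
  have hp : 1 < p := (Fact.out : p.Prime).one_lt
  haveI : FiniteDimensional (ZMod p) F := Module.Finite.of_basis b
  haveI : Algebra.IsAlgebraic (ZMod p) F := Algebra.IsAlgebraic.of_finite _ _
  have hcard : Fintype.card F = p ^ m := by
    rw [Module.card_fintype b, ZMod.card, Fintype.card_fin]
  have hpowm : ∀ z : F, z ^ p ^ m = z := by
    intro z; rw [← hcard, FiniteField.pow_card]
  have hkd : ∀ k : Fin (d + 1), (k : ℕ) ≤ d := fun k => Fin.is_le k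
  have hdm : d ≤ m := le_trans hd (Nat.div_le_self m 2)
  -- the polynomial
  set P : Polynomial F := ∑ k : Fin (d + 1),
      (Polynomial.C ((α k) ^ (p ^ d)) * Polynomial.X ^ (p ^ (d + (k : ℕ))) +
       Polynomial.C ((α k) ^ (p ^ (d - (k : ℕ)))) * Polynomial.X ^ (p ^ (d - (k : ℕ)))) with hPdef
  have hPdeg : P.natDegree ≤ p ^ (2 * d) := by
    apply Polynomial.natDegree_sum_le_of_forall_le
    intro k _
    refine le_trans (Polynomial.natDegree_add_le _ _) ?_
    have h1 : (Polynomial.C ((α k) ^ (p ^ d)) *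
        (Polynomial.X : Polynomial F) ^ (p ^ (d + (k : ℕ)))).natDegree ≤ p ^ (2 * d) := by
      refine le_trans (Polynomial.natDegree_C_mul_le _ _) ?_
      rw [Polynomial.natDegree_X_pow]
      exact Nat.pow_le_pow_right (le_of_lt hp) (by have := hkd k; omega)
    have h2 : (Polynomial.C ((α k) ^ (p ^ (d - (k : ℕ)))) *
        (Polynomial.X : Polynomial F) ^ (p ^ (d - (k : ℕ)))).natDegree ≤ p ^ (2 * d) := by
      refine le_trans (Polynomial.natDegree_C_mul_le _ _) ?_
      rw [Polynomial.natDegree_X_pow]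
      exact Nat.pow_le_pow_right (le_of_lt hp) (by omega)
    exact max_le h1 h2
  have hPne : P ≠ 0 := by
    obtain ⟨k0, hk0⟩ := Function.ne_iff.mp hα
    have hcoeff : P.coeff (p ^ (d + (k0 : ℕ))) ≠ 0 := by
      have hexp : ∀ a b2 : ℕ, p ^ a = p ^ b2 → a = b2 :=
        fun a b2 h => Nat.pow_right_injective hp h
      rw [hPdef, Polynomial.finset_sum_coeff]
      simp only [Polynomial.coeff_add, Polynomial.coeff_C_mul, Polynomial.coeff_X_pow]
      rw [Finset.sum_eq_single k0]
      · by_cases h0 : (k0 : ℕ) = 0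
        · rw [if_pos rfl, if_pos (by rw [h0]; norm_num)]
          rw [h0]
          simp only [Nat.add_zero, Nat.sub_zero, mul_one]
          rw [← two_mul]
          have h2 : (2 : F) ≠ 0 := by
            intro h
            have hdvd := (CharP.cast_eq_zero_iff F p 2).mp (by exact_mod_cast h)
            have hp2' := Nat.odd_iff.mp hp2
            have := Nat.le_of_dvd (by norm_num) hdvd
            interval_cases p <;> omega
          exact mul_ne_zero h2 (pow_ne_zero _ (by simpa using hk0))
        · rw [if_pos rfl, if_neg, mul_one, mul_zero, add_zero]
          · exact pow_ne_zero _ (by simpa using hk0)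
          · intro h
            have := hexp _ _ h
            have := hkd k0
            omega
      · intro k _ hk
        have hne1 : ¬ (p ^ (d + (k0 : ℕ)) = p ^ (d + (k : ℕ))) := by
          intro h
          exact hk (Fin.ext (by have := hexp _ _ h; omega)).symm
        have hne2 : ¬ (p ^ (d + (k0 : ℕ)) = p ^ (d - (k : ℕ))) := by
          intro h
          have h' := hexp _ _ h
          have h1 := hkd k
          have h2 : (k0 : ℕ) = 0 := by omega
          have h3 : (k : ℕ) = 0 := by omega
          exact hk (Fin.ext (by omega))
        rw [if_neg hne1, if_neg hne2, mul_zero, mul_zero, add_zero]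
      · intro h; exact absurd (Finset.mem_univ k0) h
    intro h
    rw [h, Polynomial.coeff_zero] at hcoeff
    exact hcoeff rfl
  -- kernel elements give roots of P
  have hroot : ∀ Y : Fin m → ZMod p, H.mulVecLin Y = 0 →
      P.eval (∑ j, Y j • b j) = 0 := by
    intro Y hY
    set y : F := ∑ j, Y j • b j with hy
    have hYzero : ∀ i, ∑ j, H i j * Y j = 0 := by
      intro i
      have := congrFun hY i
      simpa [Matrix.mulVecLin_apply, Matrix.mulVec, dotProduct] using this
    -- cross terms vanish
    have hcross : ∀ x : F,
        Algebra.trace (ZMod p) F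
          (∑ k : Fin (d + 1), α k * (x ^ (p ^ (k : ℕ)) * y + x * y ^ (p ^ (k : ℕ)))) = 0 := by
      intro x
      set u : Fin m → ZMod p := b.equivFun x with hu
      have hxu : ∑ j, u j • b j = x := by
        rw [hu]; exact b.sum_equivFun x
      have h1 := hF (u + Y)
      have h2 := hF u
      have h3 := hF Y
      have c1 : ∑ i, ∑ j, u i * H i j * Y j = 0 := by
        have : ∀ i, ∑ j, u i * H i j * Y j = u i * ∑ j, H i j * Y j := by
          intro i; rw [Finset.mul_sum]; exact Finset.sum_congr rfl fun j _ => by ring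
        simp [this, hYzero]
      have c2 : ∑ i, ∑ j, Y i * H i j * u j = 0 := by
        rw [Finset.sum_comm]
        have : ∀ j, ∑ i, Y i * H i j * u j = u j * ∑ i, H j i * Y i := by
          intro j
          rw [Finset.mul_sum]
          refine Finset.sum_congr rfl fun i _ => ?_
          have hsym : H j i = H i j := by
            have := congrFun (congrFun hH i) j
            simpa [Matrix.transpose_apply] using this
          rw [hsym]; ring
        have hz : ∀ j, ∑ i, H j i * Y i = 0 := hYzero
        simp [this, hz]
      have lhs_expand : ∑ i, ∑ j, (u + Y) i * H i j * (u + Y) j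
          = (∑ i, ∑ j, u i * H i j * u j) + (∑ i, ∑ j, Y i * H i j * Y j) := by
        have : ∀ i j, (u i + Y i) * H i j * (u j + Y j)
            = u i * H i j * u j + Y i * H i j * Y j
              + (u i * H i j * Y j + Y i * H i j * u j) := fun i j => by ring
        simp only [Pi.add_apply, this, Finset.sum_add_distrib]
        rw [c1, c2]; ring
      have sum_smul : ∑ j, (u + Y) j • b j = x + y := by
        simp only [Pi.add_apply, add_smul, Finset.sum_add_distrib, hxu, hy]
      have rhs_expand : ∑ k : Fin (d + 1), α k * (∑ j, (u + Y) j • b j) ^ (p ^ (k : ℕ) + 1)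
          = (∑ k : Fin (d + 1), α k * x ^ (p ^ (k : ℕ) + 1))
            + (∑ k : Fin (d + 1), α k * y ^ (p ^ (k : ℕ) + 1))
            + ∑ k : Fin (d + 1), α k * (x ^ (p ^ (k : ℕ)) * y + x * y ^ (p ^ (k : ℕ))) := by
        rw [sum_smul]
        rw [← Finset.sum_add_distrib, ← Finset.sum_add_distrib]
        refine Finset.sum_congr rfl fun k _ => ?_
        have hpow : (x + y) ^ (p ^ (k : ℕ) + 1)
            = x ^ (p ^ (k : ℕ) + 1) + y ^ (p ^ (k : ℕ) + 1)
              + (x ^ (p ^ (k : ℕ)) * y + x * y ^ (p ^ (k : ℕ))) := by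
          rw [pow_succ, add_pow_char_pow, pow_succ, pow_succ]
          ring
        rw [hpow]; ring
      rw [hxu] at h2
      rw [← hy] at h3
      rw [rhs_expand, map_add, map_add, ← h2, ← h3, lhs_expand] at h1
      exact (left_eq_add.mp h1)
    -- pass to the linearized form
    set Ly : F := ∑ k : Fin (d + 1),
        ((α k * y) ^ (p ^ (m - (k : ℕ))) + α k * y ^ (p ^ (k : ℕ))) with hLydef
    have hLy0 : ∀ x : F, Algebra.trace (ZMod p) F (x * Ly) = 0 := by
      intro x
      have hterm : ∀ k : Fin (d + 1),
          Algebra.trace (ZMod p) F (x * (α k * y) ^ (p ^ (m - (k : ℕ))))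
            = Algebra.trace (ZMod p) F (α k * (x ^ (p ^ (k : ℕ)) * y)) := by
        intro k
        have hkm : (k : ℕ) ≤ m := le_trans (hkd k) hdm
        have := trace_frob_pow_aux18 p F (m - (k : ℕ)) (α k * (x ^ (p ^ (k : ℕ)) * y))
        rw [← this]
        congr 1
        rw [mul_pow, mul_pow, mul_pow, ← pow_mul, ← pow_add]
        rw [Nat.add_sub_cancel' hkm, hpowm x]
        ring
      calc Algebra.trace (ZMod p) F (x * Ly)
          = ∑ k : Fin (d + 1),
              (Algebra.trace (ZMod p) F (x * (α k * y) ^ (p ^ (m - (k : ℕ))))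
                + Algebra.trace (ZMod p) F (α k * (x * y ^ (p ^ (k : ℕ))))) := by
            rw [hLydef, Finset.mul_sum, map_sum]
            refine Finset.sum_congr rfl fun k _ => ?_
            rw [← map_add]
            congr 1
            ring
        _ = Algebra.trace (ZMod p) F
              (∑ k : Fin (d + 1), α k * (x ^ (p ^ (k : ℕ)) * y + x * y ^ (p ^ (k : ℕ)))) := by
            rw [map_sum]
            refine Finset.sum_congr rfl fun k _ => ?_
            rw [hterm k, ← map_add]
            congr 1
            ring
        _ = 0 := hcross x
    have hLy : Ly = 0 := by
      apply (traceForm_nondegenerate (ZMod p) F).1 Ly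
      intro x
      rw [Algebra.traceForm_apply, mul_comm]
      exact hLy0 x
    -- P.eval y = Ly ^ (p ^ d)
    have hEval : P.eval y = Ly ^ (p ^ d) := by
      rw [hLydef, sum_pow_char_pow, hPdef]
      rw [Polynomial.eval_finset_sum]
      refine Finset.sum_congr rfl fun k _ => ?_
      have hk : (k : ℕ) ≤ d := hkd k
      simp only [Polynomial.eval_add, Polynomial.eval_mul, Polynomial.eval_C,
        Polynomial.eval_pow, Polynomial.eval_X]
      rw [add_pow_char_pow]
      have t1 : ((α k * y) ^ (p ^ (m - (k : ℕ)))) ^ (p ^ d)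
          = α k ^ (p ^ (d - (k : ℕ))) * y ^ (p ^ (d - (k : ℕ))) := by
        rw [← pow_mul, ← pow_add]
        have : m - (k : ℕ) + d = (d - (k : ℕ)) + m := by omega
        rw [this, pow_add, pow_mul, hpowm ((α k * y) ^ (p ^ (d - (k : ℕ)))), mul_pow]
      have t2 : (α k * y ^ (p ^ (k : ℕ))) ^ (p ^ d)
          = α k ^ (p ^ d) * y ^ (p ^ (d + (k : ℕ))) := by
        rw [mul_pow, ← pow_mul, ← pow_add, Nat.add_comm (k : ℕ) d]
      rw [t1, t2]
      ring
    rw [hEval, hLy, zero_pow (pow_ne_zero d (by omega))]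
  -- counting
  set toF : (Fin m → ZMod p) ≃ₗ[ZMod p] F := b.equivFun.symm with htoF
  set K := LinearMap.ker H.mulVecLin with hKdef
  set K' := K.map (toF : (Fin m → ZMod p) →ₗ[ZMod p] F) with hK'def
  haveI : Fintype K' := Fintype.ofFinite _
  have hmemroot : ∀ z : F, z ∈ K' → z ∈ P.roots.toFinset := by
    intro z hz
    obtain ⟨Y, hY, rfl⟩ := hz
    rw [Multiset.mem_toFinset, Polynomial.mem_roots hPne]
    have : toF Y = ∑ j, Y j • b j := b.equivFun_symm_apply Y
    simp only [LinearEquiv.coe_coe, this]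
    exact hroot Y (LinearMap.mem_ker.mp hY)
  have hcardK' : Fintype.card K' ≤ P.roots.toFinset.card := by
    rw [← Fintype.card_coe (P.roots.toFinset)]
    exact Fintype.card_le_of_injective
      (fun z => (⟨z.1, hmemroot z.1 z.2⟩ : (P.roots.toFinset : Finset F)))
      (fun a b2 hab => Subtype.ext (Subtype.mk_eq_mk.mp hab))
  have hcardpow : Fintype.card K' = p ^ Module.finrank (ZMod p) K' := by
    rw [Module.card_eq_pow_finrank (K := ZMod p) (V := K'), ZMod.card]
  have hfrk : Module.finrank (ZMod p) K' = Module.finrank (ZMod p) K :=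
    LinearEquiv.finrank_map_eq toF K
  have hfrle : Module.finrank (ZMod p) K ≤ 2 * d := by
    have h1 : p ^ Module.finrank (ZMod p) K ≤ p ^ (2 * d) := by
      rw [← hfrk, ← hcardpow]
      refine le_trans hcardK' (le_trans (Multiset.toFinset_card_le _) ?_)
      exact le_trans (Polynomial.card_roots' P) hPdeg
    exact (Nat.pow_le_pow_iff_right hp).mp h1
  have hrn := LinearMap.finrank_range_add_finrank_ker H.mulVecLin
  have hpi : Module.finrank (ZMod p) (Fin m → ZMod p) = m := by
    simp [Module.finrank_pi]
  rw [hpi] at hrn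
  have hrank : H.rank = Module.finrank (ZMod p) (LinearMap.range H.mulVecLin) := rfl
  have hfin : H.rank + Module.finrank (ZMod p) K = m := by rw [hrank, hKdef]; exact hrn
  omega
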